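/- Under the dynamics T_i = σ + (1-σ)L_{i-1} and L_i = (1-γ-φ)T_i/(1-γ-φT_i), a point with T ∈ (0,1) is a fixed point if and only if φ = σ(1-γ)/T. Additionally, T = L = 1 is always a fixed point. -/

import Mathlib

theorem leader_fee_equilibrium (σ γ φ : ℝ)
    (hσ : σ ∈ Set.Ioo (0:ℝ) 1) (hγ : γ ∈ Set.Ioo (0:ℝ) 1)
    (hφ : φ ∈ Set.Ioo (0:ℝ) (1 - γ)) :
    (∀ T ∈ Set.Ioo (0:ℝ) 1,
      (σ + (1 - σ) * ((1 - γ - φ) * T / (1 - γ - φ * T)) = T ↔ φ = σ * (1 - γ) / T)) ∧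
    σ + (1 - σ) * ((1 - γ - φ) * 1 / (1 - γ - φ * 1)) = 1 := by
  obtain ⟨hσ0, hσ1⟩ := hσ
  obtain ⟨hγ0, hγ1⟩ := hγ
  obtain ⟨hφ0, hφ1⟩ := hφ
  constructor
  · intro T ⟨hT0, hT1⟩
    have hden : 1 - γ - φ * T > 0 := by nlinarith
    have hden' : 1 - γ - φ * T ≠ 0 := ne_of_gt hden
    have hTne : T ≠ 0 := ne_of_gt hT0
    constructor
    · intro h
      field_simp at h ⊢
      nlinarith [sq_nonneg T, sq_nonneg (1 - T)]
    · intro h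
      field_simp at h ⊢
      nlinarith
  · have : (1 : ℝ) - γ - φ * 1 ≠ 0 := by nlinarith
    have h2 : (1:ℝ) - γ - φ ≠ 0 := by nlinarith
    field_simp
    ring
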